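/- Fix n : ℕ and β : ℝ. For i : Fin n, let X_i : Matrix ((Fin n) → Bool) ((Fin n) → Bool) ℂ be the matrix with (X_i) z z' = 1 if z' = Function.update z i (!(z i)) and 0 otherwise, and let B' = ∑ i, X_i. Then for all bitstrings z z' : Fin n → Bool, (Matrix.exp (I·β·B')) z z' = (Real.cos β)^(n - d) · (I · Real.sin β)^d, where d is the Hamming distance between z and z' (the number of indices i with z i ≠ z' i). -/

import Mathlib

open Matrix Complex

/-- The bit-flip (Pauli X on qubit `i`) matrix on `n`-bit strings. -/
noncomputable def pauliX (n : ℕ) (i : Fin n) :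
    Matrix (Fin n → Bool) (Fin n → Bool) ℂ :=
  Matrix.of fun z z' => if z' = Function.update z i (!(z i)) then 1 else 0

section Aux

attribute [local instance] Matrix.linftyOpNormedRing Matrix.linftyOpNormedAlgebra

variable {n : ℕ}

lemma pauliX_mul_apply (i : Fin n) (M : Matrix (Fin n → Bool) (Fin n → Bool) ℂ)
    (z z' : Fin n → Bool) :
    (pauliX n i * M) z z' = M (Function.update z i (!(z i))) z' := by
  simp [pauliX, Matrix.mul_apply, Finset.sum_ite_eq]

lemma pauliX_sq (i : Fin n) : pauliX n i * pauliX n i = 1 := by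
  ext z z'
  rw [pauliX_mul_apply]
  simp [pauliX, Matrix.one_apply, Function.update_idem, eq_comm]

lemma pauliX_comm (i j : Fin n) : Commute (pauliX n i) (pauliX n j) := by
  rcases eq_or_ne i j with rfl | h
  · rfl
  · show _ = _
    ext z z'
    rw [pauliX_mul_apply, pauliX_mul_apply]
    simp only [pauliX, Matrix.of_apply, Function.update_of_ne h, Function.update_of_ne h.symm]
    rw [Function.update_comm h]

lemma exp_smul_involution {m : Type*} [Fintype m] [DecidableEq m]
    (A : Matrix m m ℂ) (h : A * A = 1) (β : ℝ) :
    NormedSpace.exp ((Complex.I * (β : ℂ)) • A) =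
      (Real.cos β : ℂ) • 1 + (Complex.I * (Real.sin β : ℂ)) • A := by
  rw [NormedSpace.exp_eq_tsum ℂ]
  refine HasSum.tsum_eq (HasSum.even_add_odd ?_ ?_)
  · have hc := (Complex.hasSum_cos' (β : ℂ)).smul_const (1 : Matrix m m ℂ)
    rw [← Complex.ofReal_cos] at hc
    convert hc using 2 with k
    case e'_3 => rfl
    have hA : A ^ (2 * k) = 1 := by rw [pow_mul, sq, h, one_pow]
    rw [smul_pow, hA, smul_smul]
    congr 1
    rw [mul_comm Complex.I (β : ℂ), div_eq_inv_mul]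
  · have hs := ((Complex.hasSum_sin' (β : ℂ)).mul_right Complex.I).smul_const A
    rw [← Complex.ofReal_sin] at hs
    convert hs using 2 with k
    case e'_3 => rfl
    have hA : A ^ (2 * k + 1) = A := by rw [pow_succ, pow_mul, sq, h, one_pow, one_mul]
    rw [smul_pow, hA, smul_smul]
    congr 1
    rw [div_mul_cancel₀ _ Complex.I_ne_zero, mul_comm Complex.I (β : ℂ),
      div_eq_inv_mul]
    exact mul_comm _ _

lemma exp_sum_entry (β : ℝ) (s : Finset (Fin n)) (z z' : Fin n → Bool) :
    NormedSpace.exp ((Complex.I * (β : ℂ)) • ∑ i ∈ s, pauliX n i) z z' =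
      if ∀ i ∉ s, z i = z' i then
        ∏ i ∈ s, (if z i = z' i then (Real.cos β : ℂ) else Complex.I * (Real.sin β : ℂ))
      else 0 := by
  induction s using Finset.induction generalizing z with
  | empty =>
      simp [NormedSpace.exp_zero, Matrix.one_apply, funext_iff]
  | @insert j s hj ih =>
      have hcomm : Commute ((Complex.I * (β : ℂ)) • pauliX n j)
          ((Complex.I * (β : ℂ)) • ∑ i ∈ s, pauliX n i) :=
        ((Commute.sum_right s _ _ fun i _ => pauliX_comm j i).smul_left _).smul_right _
      rw [Finset.sum_insert hj, smul_add, Matrix.exp_add_of_commute _ _ hcomm,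
        exp_smul_involution _ (pauliX_sq j)]
      have hmul : ((Real.cos β : ℂ) • 1 + (Complex.I * (Real.sin β : ℂ)) • pauliX n j) *
            NormedSpace.exp ((Complex.I * (β : ℂ)) • ∑ i ∈ s, pauliX n i) =
          (Real.cos β : ℂ) • NormedSpace.exp ((Complex.I * (β : ℂ)) • ∑ i ∈ s, pauliX n i) +
            (Complex.I * (Real.sin β : ℂ)) •
              (pauliX n j * NormedSpace.exp ((Complex.I * (β : ℂ)) • ∑ i ∈ s, pauliX n i)) := by
        rw [Matrix.add_mul, Matrix.smul_mul, Matrix.smul_mul, Matrix.one_mul]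
      rw [hmul]
      simp only [Matrix.add_apply, Matrix.smul_apply, pauliX_mul_apply, smul_eq_mul]
      rw [ih z, ih (Function.update z j (!(z j)))]
      by_cases hzj : z j = z' j
      · have h2 : ¬ (∀ i ∉ s, Function.update z j (!(z j)) i = z' i) := by
          intro h
          have := h j hj
          rw [Function.update_self] at this
          rw [← hzj] at this
          exact (Bool.not_ne_self (z j)) this
        have h1 : (∀ i ∉ s, z i = z' i) ↔ (∀ i ∉ insert j s, z i = z' i) := by
          constructor
          · intro h i hi
            exact h i fun hs => hi (Finset.mem_insert_of_mem hs)
          · intro h i hi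
            rcases eq_or_ne i j with rfl | hij
            · exact hzj
            · exact h i (by simp [Finset.mem_insert, hij, hi])
        rw [if_neg h2, Finset.prod_insert hj, if_pos hzj]
        by_cases hc : ∀ i ∉ insert j s, z i = z' i
        · rw [if_pos (h1.mpr hc), if_pos hc]; ring
        · rw [if_neg (fun h => hc (h1.mp h)), if_neg hc]; ring
      · have h' : (!(z j)) = z' j := by
          revert hzj; cases z j <;> cases z' j <;> simp
        have h1 : ¬ (∀ i ∉ s, z i = z' i) := fun h => hzj (h j hj)
        have h2 : (∀ i ∉ s, Function.update z j (!(z j)) i = z' i) ↔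
            (∀ i ∉ insert j s, z i = z' i) := by
          constructor
          · intro h i hi
            have hij : i ≠ j := by rintro rfl; exact hi (Finset.mem_insert_self i s)
            have his : i ∉ s := fun hs => hi (Finset.mem_insert_of_mem hs)
            have := h i his
            rwa [Function.update_of_ne hij] at this
          · intro h i hi
            rcases eq_or_ne i j with rfl | hij
            · rw [Function.update_self]; exact h'
            · rw [Function.update_of_ne hij]
              exact h i (by simp [Finset.mem_insert, hij, hi])
        have h3 : ∀ i ∈ s,
            (if Function.update z j (!(z j)) i = z' i then (Real.cos β : ℂ)
              else Complex.I * (Real.sin β : ℂ)) =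
            (if z i = z' i then (Real.cos β : ℂ) else Complex.I * (Real.sin β : ℂ)) := by
          intro i hi
          have hij : i ≠ j := by rintro rfl; exact hj hi
          rw [Function.update_of_ne hij]
        rw [if_neg h1, Finset.prod_insert hj, if_neg hzj]
        by_cases hc : ∀ i ∉ insert j s, z i = z' i
        · rw [if_pos (h2.mpr hc), if_pos hc, Finset.prod_congr rfl h3]; ring
        · rw [if_neg (fun h => hc (h2.mp h)), if_neg hc]; ring

end Aux

/-- The mixing unitary `e^{iβ ∑ᵢ Xᵢ}` factorizes into single-qubit rotations:
its entries are `(cos β)^(n-d) (i sin β)^d` where `d` is the Hamming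
distance between the two bitstrings. -/
theorem exp_mixer_entries (n : ℕ) (β : ℝ)
    (B' : Matrix (Fin n → Bool) (Fin n → Bool) ℂ)
    (hB' : B' = ∑ i, pauliX n i)
    (z z' : Fin n → Bool) :
    NormedSpace.exp ((Complex.I * (β : ℂ)) • B') z z' =
      (Real.cos β : ℂ) ^ (n - hammingDist z z') *
        (Complex.I * (Real.sin β : ℂ)) ^ (hammingDist z z') := by
  subst hB'
  rw [exp_sum_entry β Finset.univ z z', if_pos (by simp)]
  rw [Finset.prod_ite _ _, Finset.prod_const, Finset.prod_const]
  have hd : hammingDist z z' = (Finset.univ.filter fun i => ¬ z i = z' i).card := rfl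
  have hcard : (Finset.univ.filter fun i => z i = z' i).card +
      (Finset.univ.filter fun i => ¬ z i = z' i).card = n := by
    rw [Finset.card_filter_add_card_filter_not]
    simp
  rw [hd]
  congr 2
  omega
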